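/- Let a, b be real polynomials with a(0) = 0 and b(0) ≠ 0, let λ_max > 0 be real, and assume a(iω) + λ·b(iω) ≠ 0 for all real ω and all λ ∈ (0, λ_max]. Suppose sup_{ω≥0} |λ_max·b(iω)/(a(iω) + λ_max·b(iω))| = 1. Then for every real λ with 0 < λ ≤ λ_max and every real γ with γ ≥ λ, one has sup_{ω≥0} |(a(iω) + γ·b(iω))/(a(iω) + λ·b(iω))| = γ/λ; that is, the H∞ norm of the transfer function Z_{γ,λ}(s) = (a(s)+γ·b(s))/(a(s)+λ·b(s)) equals its steady-state gain γ/λ. -/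

import Mathlib

/-- Evaluation of a real polynomial on the imaginary axis, at `s = iω`. -/
noncomputable def evalIm (p : Polynomial ℝ) (ω : ℝ) : ℂ :=
  Polynomial.aeval (Complex.I * (ω : ℂ)) p

lemma key_ineq (A B : ℂ) (lm lam gam : ℝ) (hlam : 0 < lam) (h1 : lam ≤ lm)
    (h2 : lam ≤ gam)
    (hbd : ‖(lm : ℂ) * B‖ ≤ ‖A + (lm : ℂ) * B‖) :
    lam * ‖A + (gam : ℂ) * B‖ ≤ gam * ‖A + (lam : ℂ) * B‖ := by
  have hsq : (lam * ‖A + (gam : ℂ) * B‖) ^ 2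
      ≤ (gam * ‖A + (lam : ℂ) * B‖) ^ 2 := by
    have hbd2 : Complex.normSq ((lm : ℂ) * B) ≤ Complex.normSq (A + (lm : ℂ) * B) := by
      have := mul_self_le_mul_self (norm_nonneg _) hbd
      rwa [← pow_two, ← pow_two, ← Complex.normSq_eq_norm_sq, ← Complex.normSq_eq_norm_sq] at this
    have e1 : ∀ c : ℝ, Complex.normSq (A + (c : ℂ) * B)
        = Complex.normSq A + 2 * c * (A * starRingEnd ℂ B).re + c ^ 2 * Complex.normSq B := by
      intro c
      rw [Complex.normSq_add]
      simp [Complex.normSq_mul, Complex.normSq_ofReal, map_mul, Complex.mul_re,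
        Complex.conj_re, Complex.conj_im, Complex.ofReal_re, Complex.ofReal_im]
      ring
    have e2 : Complex.normSq ((lm : ℂ) * B) = lm ^ 2 * Complex.normSq B := by
      rw [Complex.normSq_mul, Complex.normSq_ofReal]; ring
    rw [mul_pow, mul_pow, Complex.sq_norm, Complex.sq_norm, e1, e1]
    rw [e1, e2] at hbd2
    set r := (A * starRingEnd ℂ B).re
    set nA := Complex.normSq A
    set nB := Complex.normSq B
    have hnA : 0 ≤ nA := Complex.normSq_nonneg A
    have hnB : 0 ≤ nB := Complex.normSq_nonneg B
    have h0 : 0 ≤ nA + 2 * lm * r := by nlinarith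
    have hlm : 0 < lm := lt_of_lt_of_le hlam h1
    nlinarith [mul_nonneg (mul_nonneg (le_of_lt hlam) (le_trans hlam.le h2)) h0,
      mul_nonneg (sub_nonneg.2 h2) hnA,
      mul_nonneg (mul_nonneg (sub_nonneg.2 h2) hnA) (sub_nonneg.2 h1),
      mul_nonneg (mul_nonneg (sub_nonneg.2 h2) (le_of_lt hlam)) h0,
      mul_nonneg (mul_nonneg (mul_nonneg (sub_nonneg.2 h2) (le_trans hlam.le h2)) (le_of_lt hlam)) h0]
  have h1' : 0 ≤ lam * ‖A + (gam : ℂ) * B‖ :=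
    mul_nonneg hlam.le (norm_nonneg _)
  have h2' : 0 ≤ gam * ‖A + (lam : ℂ) * B‖ :=
    mul_nonneg (le_trans hlam.le h2) (norm_nonneg _)
  exact (pow_le_pow_iff_left₀ h1' h2' two_ne_zero).mp hsq

theorem Z_norm_eq_steady_state_gain
    (a b : Polynomial ℝ) (ha0 : a.eval 0 = 0) (hb0 : b.eval 0 ≠ 0)
    (lmax : ℝ) (hlmax : 0 < lmax)
    (hstab : ∀ (ω l : ℝ), 0 < l → l ≤ lmax →
      evalIm a ω + (l : ℂ) * evalIm b ω ≠ 0)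
    (hnorm : (⨆ ω : {x : ℝ // 0 ≤ x},
      ‖(lmax : ℂ) * evalIm b ω.val /
        (evalIm a ω.val + (lmax : ℂ) * evalIm b ω.val)‖) = 1)
    (lam gam : ℝ) (hlam : 0 < lam) (hlamle : lam ≤ lmax) (hgam : lam ≤ gam) :
    (⨆ ω : {x : ℝ // 0 ≤ x},
      ‖(evalIm a ω.val + (gam : ℂ) * evalIm b ω.val) /
        (evalIm a ω.val + (lam : ℂ) * evalIm b ω.val)‖) = gam / lam := by
  have hgam0 : 0 < gam := lt_of_lt_of_le hlam hgam
  set fM : {x : ℝ // 0 ≤ x} → ℝ := fun ω =>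
    ‖(lmax : ℂ) * evalIm b ω.val /
      (evalIm a ω.val + (lmax : ℂ) * evalIm b ω.val)‖ with hfM
  set f : {x : ℝ // 0 ≤ x} → ℝ := fun ω =>
    ‖(evalIm a ω.val + (gam : ℂ) * evalIm b ω.val) /
      (evalIm a ω.val + (lam : ℂ) * evalIm b ω.val)‖ with hf
  -- boundedness of fM
  have hbddM : BddAbove (Set.range fM) := by
    by_contra h
    rw [Real.iSup_of_not_bddAbove h] at hnorm
    norm_num at hnorm
  have hMle : ∀ ω : {x : ℝ // 0 ≤ x}, fM ω ≤ 1 := fun ω =>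
    hnorm ▸ le_ciSup hbddM ω
  -- pointwise bound on f
  have hfle : ∀ ω : {x : ℝ // 0 ≤ x}, f ω ≤ gam / lam := by
    intro ω
    have hDM : evalIm a ω.val + (lmax : ℂ) * evalIm b ω.val ≠ 0 :=
      hstab ω.val lmax hlmax le_rfl
    have hDl : evalIm a ω.val + (lam : ℂ) * evalIm b ω.val ≠ 0 :=
      hstab ω.val lam hlam hlamle
    have hbd : ‖(lmax : ℂ) * evalIm b ω.val‖
        ≤ ‖evalIm a ω.val + (lmax : ℂ) * evalIm b ω.val‖ := by
      have := hMle ω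
      rw [hfM] at this
      simp only [norm_div] at this
      rwa [div_le_one (norm_pos_iff.mpr hDM)] at this
    have hkey := key_ineq (evalIm a ω.val) (evalIm b ω.val) lmax lam gam hlam hlamle hgam hbd
    rw [hf]
    simp only [norm_div]
    rw [div_le_div_iff₀ (norm_pos_iff.mpr hDl) hlam]
    linarith [hkey]
  have hbdd : BddAbove (Set.range f) := ⟨gam / lam, by
    rintro x ⟨ω, rfl⟩; exact hfle ω⟩
  -- value at ω = 0
  have h00 : ∀ p : Polynomial ℝ, evalIm p 0 = ((p.eval 0 : ℝ) : ℂ) := by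
    intro p
    rw [evalIm, Polynomial.aeval_def]
    norm_num [Polynomial.eval₂_at_zero, Polynomial.coeff_zero_eq_eval_zero]
  have ha00 : evalIm a 0 = 0 := by rw [h00, ha0]; norm_num
  have hb00 : evalIm b 0 = ((b.eval 0 : ℝ) : ℂ) := h00 b
  have hf0 : f ⟨0, le_rfl⟩ = gam / lam := by
    rw [hf]
    simp only [ha00, hb00, zero_add]
    rw [mul_div_mul_right _ _ (by exact_mod_cast hb0), norm_div]
    simp [Complex.norm_real, abs_of_pos hgam0, abs_of_pos hlam]
  refine le_antisymm (ciSup_le hfle) ?_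
  calc gam / lam = f ⟨0, le_rfl⟩ := hf0.symm
    _ ≤ ⨆ ω, f ω := le_ciSup hbdd _
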